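/- arXiv:1807.02317 — 3 statements merged into one kernel-verified Lean document; each statement's English description precedes it below -/
import Mathlib

section
/- Let V, g, η, L, ℓ, φ, ħ be as above, let k ∈ ℝ, let C : V → ℝ be linear with C(η) = 0, and let B : V × V → ℝ be bilinear and indicatory (B(X,Y) = B(φX, φY)). Define R(X,Y,Z,W) := 𝔄_{X,Y}{ ħ(Y,W)[ ℓ(Z)(kℓ(X) + (1/3)C(X)) + (1/3)B(Z,X) + (2/3)ℓ(X)C(Z) + kħ(Z,X) ] + (1/3)ℓ(X)C(Y)ħ(Z,W) + L⁻¹ħ(X,Z)ℓ(W)(kℓ(Y) + (1/3)C(Y)) }, where 𝔄_{X,Y} denotes antisymmetrization in X, Y. Then (P·R)(X,Y,Z,W) := R(φX, φY, φZ, φW) = 𝔄_{X,Y}{ ħ(Y,W)( (1/3)B(Z,X) + kħ(Z,X) ) }. -/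
open RealInnerProductSpace

theorem stmt_6 {V : Type*} [NormedAddCommGroup V] [InnerProductSpace ℝ V]
    (η : V) (L : ℝ) (hL : 0 < L) (hη : ⟪η, η⟫ = L ^ 2)
    (ell : V → ℝ) (hell : ∀ X, ell X = L⁻¹ * ⟪η, X⟫)
    (φ : V → V) (hφ : ∀ X, φ X = X - (L⁻¹ * ell X) • η)
    (hbar : V → V → ℝ) (hhbar : ∀ X Y, hbar X Y = ⟪X, Y⟫ - ell X * ell Y)
    (k : ℝ) (C : V →ₗ[ℝ] ℝ) (hCη : C η = 0)
    (B : V →ₗ[ℝ] V →ₗ[ℝ] ℝ) (hBind : ∀ X Y, B X Y = B (φ X) (φ Y))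
    (R : V → V → V → V → ℝ)
    (hR : ∀ X Y Z W, R X Y Z W =
      (hbar Y W * (ell Z * (k * ell X + (1/3) * C X) + (1/3) * B Z X
          + (2/3) * ell X * C Z + k * hbar Z X)
        + (1/3) * ell X * C Y * hbar Z W
        + L⁻¹ * hbar X Z * ell W * (k * ell Y + (1/3) * C Y))
      - (hbar X W * (ell Z * (k * ell Y + (1/3) * C Y) + (1/3) * B Z Y
          + (2/3) * ell Y * C Z + k * hbar Z Y)
        + (1/3) * ell Y * C X * hbar Z W
        + L⁻¹ * hbar Y Z * ell W * (k * ell X + (1/3) * C X))) :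
    ∀ X Y Z W, R (φ X) (φ Y) (φ Z) (φ W)
      = hbar Y W * ((1/3) * B Z X + k * hbar Z X)
        - hbar X W * ((1/3) * B Z Y + k * hbar Z Y) := by
  have hL0 : (L : ℝ) ≠ 0 := ne_of_gt hL
  have hip : ∀ X, ⟪η, X⟫ = L * ell X := by
    intro X; rw [hell]; field_simp
  have hip2 : ∀ X, ⟪X, η⟫ = L * ell X := by
    intro X; rw [real_inner_comm, hip]
  have ellsmul : ∀ c : ℝ, ell (c • η) = c * L := by
    intro c; rw [hell, real_inner_smul_right, hη]; field_simp
  have ellφ : ∀ X, ell (φ X) = 0 := by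
    intro X
    rw [hell, hφ, inner_sub_right, real_inner_smul_right, hη, hip]
    field_simp
    ring
  have hbarφ : ∀ X Y, hbar (φ X) (φ Y) = hbar X Y := by
    intro X Y
    rw [hhbar, hhbar, ellφ, ellφ, hφ, hφ]
    simp only [inner_sub_left, inner_sub_right, real_inner_smul_left,
      real_inner_smul_right, hη, hip, hip2, ellsmul]
    field_simp
    ring
  intro X Y Z W
  rw [hR]
  simp only [ellφ, hbarφ, ← hBind]
  ring
end

section
/- In the setting of the previous statement, the tensor R is of H_p-scalar-curvature type with scalar ε, i.e. (P·R)(X,Y,Z,W) = ε·𝔄_{X,Y}{ħ(X,Z)ħ(Y,W)} for all X,Y,Z,W, if and only if B(X,Y) = 3(ε − k)·ħ(X,Y) for all X,Y (assuming dim V ≥ 4 and B symmetric). -/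
open RealInnerProductSpace

theorem stmt_7 {V : Type*} [NormedAddCommGroup V] [InnerProductSpace ℝ V]
    [FiniteDimensional ℝ V] (n : ℕ) (hn : Module.finrank ℝ V = n) (hn4 : 4 ≤ n)
    (η : V) (L : ℝ) (hL : 0 < L) (hη : ⟪η, η⟫ = L ^ 2)
    (ell : V → ℝ) (hell : ∀ X, ell X = L⁻¹ * ⟪η, X⟫)
    (φ : V → V) (hφ : ∀ X, φ X = X - (L⁻¹ * ell X) • η)
    (hbar : V → V → ℝ) (hhbar : ∀ X Y, hbar X Y = ⟪X, Y⟫ - ell X * ell Y)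
    (k ε : ℝ) (C : V →ₗ[ℝ] ℝ) (hCη : C η = 0)
    (B : V →ₗ[ℝ] V →ₗ[ℝ] ℝ) (hBind : ∀ X Y, B X Y = B (φ X) (φ Y))
    (hBsymm : ∀ X Y, B X Y = B Y X)
    (R : V → V → V → V → ℝ)
    (hR : ∀ X Y Z W, R X Y Z W =
      (hbar Y W * (ell Z * (k * ell X + (1/3) * C X) + (1/3) * B Z X
          + (2/3) * ell X * C Z + k * hbar Z X)
        + (1/3) * ell X * C Y * hbar Z W
        + L⁻¹ * hbar X Z * ell W * (k * ell Y + (1/3) * C Y))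
      - (hbar X W * (ell Z * (k * ell Y + (1/3) * C Y) + (1/3) * B Z Y
          + (2/3) * ell Y * C Z + k * hbar Z Y)
        + (1/3) * ell Y * C X * hbar Z W
        + L⁻¹ * hbar Y Z * ell W * (k * ell X + (1/3) * C X))) :
    (∀ X Y Z W, R (φ X) (φ Y) (φ Z) (φ W)
        = ε * (hbar X Z * hbar Y W - hbar Y Z * hbar X W))
    ↔ (∀ X Y, B X Y = 3 * (ε - k) * hbar X Y) := by
  have hL0 : L ≠ 0 := ne_of_gt hL
  have hellφ : ∀ X, ell (φ X) = 0 := by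
    intro X
    rw [hell, hφ, inner_sub_right, inner_smul_right, hη, hell]
    field_simp
    ring
  have hinnerφ : ∀ X Y, (⟪φ X, φ Y⟫ : ℝ) = hbar X Y := by
    intro X Y
    rw [hφ X, hφ Y, inner_sub_left, inner_sub_right, inner_sub_right,
      inner_smul_left, inner_smul_right, inner_smul_right, inner_smul_left,
      hη, hhbar, hell X, hell Y, real_inner_comm η X]
    field_simp
    ring
  have hhbarφ : ∀ X Y, hbar (φ X) (φ Y) = hbar X Y := by
    intro X Y
    rw [hhbar, hellφ, hellφ, hinnerφ]
    ring
  have hsymm : ∀ X Y, hbar X Y = hbar Y X := by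
    intro X Y; rw [hhbar, hhbar, real_inner_comm]; ring
  have key : ∀ X Y Z W, R (φ X) (φ Y) (φ Z) (φ W)
      = hbar Y W * ((1/3) * B Z X + k * hbar Z X)
        - hbar X W * ((1/3) * B Z Y + k * hbar Z Y) := by
    intro X Y Z W
    rw [hR]
    simp only [hellφ, hhbarφ, ← hBind]
    ring
  constructor
  · intro h X Y
    -- find v with ⟪η, v⟫ = 0, ⟪Y, v⟫ = 0, v ≠ 0
    set f : V →ₗ[ℝ] ℝ × ℝ :=
      { toFun := fun v => (⟪η, v⟫, ⟪Y, v⟫)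
        map_add' := by intro a b; simp [inner_add_right]
        map_smul' := by intro c a; simp [inner_smul_right] } with hf
    have hker : LinearMap.ker f ≠ ⊥ := by
      intro hbot
      have h1 := LinearMap.finrank_range_add_finrank_ker f
      rw [hbot] at h1
      simp only [finrank_bot, add_zero, hn] at h1
      have h2 : Module.finrank ℝ ↥(LinearMap.range f) ≤ Module.finrank ℝ (ℝ × ℝ) :=
        Submodule.finrank_le _
      simp only [Module.finrank_prod, Module.finrank_self] at h2
      omega
    obtain ⟨v, hv, hv0⟩ := Submodule.exists_mem_ne_zero_of_ne_bot hker
    rw [LinearMap.mem_ker] at hv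
    have hηv : (⟪η, v⟫ : ℝ) = 0 := congrArg Prod.fst hv
    have hYv : (⟪Y, v⟫ : ℝ) = 0 := congrArg Prod.snd hv
    have hellv : ell v = 0 := by rw [hell, hηv]; ring
    have hbYv : hbar Y v = 0 := by rw [hhbar, hYv, hellv]; ring
    have hbvv : hbar v v ≠ 0 := by
      rw [hhbar, hellv, real_inner_self_eq_norm_sq]
      simpa using hv0
    have heq := h Y v X v
    rw [key, hbYv] at heq
    have heq2 : hbar v v * ((1/3) * B X Y + k * hbar X Y)
        = hbar v v * (ε * hbar Y X) := by linarith [heq]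
    have heq3 := mul_left_cancel₀ hbvv heq2
    rw [hsymm Y X] at heq3
    linarith
  · intro h X Y Z W
    rw [key, h Z X, h Z Y, hsymm Z X, hsymm Z Y]
    ring
end

section
/- Let V, g, η, L, ℓ, φ, ħ be as above and let Q be a quadrilinear form on V satisfying Q(X,Y,Z,W) = q{ ħ(X,Z)ħ(Y,W) − ħ(X,W)ħ(Y,Z) } for a scalar q. If R and R̊ are quadrilinear forms related by R(X,Y,Z,W) = (1/2){R̊(X,Y,Z,W) − R̊(X,Y,W,Z)} − Q(X,Y,Z,W), and R̊ is of H_p-scalar-curvature type with scalar k, i.e. (P·R̊)(X,Y,Z,W) = k·𝔄_{X,Y}{ħ(X,Z)ħ(Y,W)}, then (P·R)(X,Y,Z,W) = (k − q){ ħ(X,Z)ħ(Y,W) − ħ(X,W)ħ(Y,Z) }. -/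
open RealInnerProductSpace

theorem stmt_13 {V : Type*} [NormedAddCommGroup V] [InnerProductSpace ℝ V]
    (η : V) (L : ℝ) (hL : 0 < L) (hη : ⟪η, η⟫ = L ^ 2)
    (ell : V → ℝ) (hell : ∀ X, ell X = L⁻¹ * ⟪η, X⟫)
    (φ : V → V) (hφ : ∀ X, φ X = X - (L⁻¹ * ell X) • η)
    (hbar : V → V → ℝ) (hhbar : ∀ X Y, hbar X Y = ⟪X, Y⟫ - ell X * ell Y)
    (q k : ℝ) (Q R R₀ : V → V → V → V → ℝ)
    (hQ : ∀ X Y Z W, Q X Y Z W = q * (hbar X Z * hbar Y W - hbar X W * hbar Y Z))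
    (hrel : ∀ X Y Z W, R X Y Z W = (1/2) * (R₀ X Y Z W - R₀ X Y W Z) - Q X Y Z W)
    (hHp : ∀ X Y Z W, R₀ (φ X) (φ Y) (φ Z) (φ W)
      = k * (hbar X Z * hbar Y W - hbar Y Z * hbar X W)) :
    ∀ X Y Z W, R (φ X) (φ Y) (φ Z) (φ W)
      = (k - q) * (hbar X Z * hbar Y W - hbar X W * hbar Y Z) := by
  have hL0 : L ≠ 0 := ne_of_gt hL
  have hinnη : ∀ X : V, ⟪η, X⟫ = L * ell X := by
    intro X
    rw [hell]
    field_simp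
  have hellφ : ∀ X : V, ell (φ X) = 0 := by
    intro X
    rw [hell, hφ, inner_sub_right, real_inner_smul_right, hη, hinnη]
    field_simp
    ring
  have hhφ : ∀ X Y : V, hbar (φ X) (φ Y) = hbar X Y := by
    intro X Y
    rw [hhbar, hhbar, hellφ, hellφ, hφ, hφ, inner_sub_left, inner_sub_right, inner_sub_right,
      real_inner_smul_left, real_inner_smul_left, real_inner_smul_right,
      real_inner_smul_right, hη, hinnη]
    rw [real_inner_comm η X, hinnη]
    field_simp
    ring
  intro X Y Z W
  rw [hrel, hQ, hHp, hHp, hhφ, hhφ, hhφ, hhφ]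
  ring
end
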